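/- arXiv:2601.13586 — 2 statements merged into one kernel-verified Lean document; each statement's English description precedes it below -/
import Mathlib

section
/- Assume μ₁ > μ₂. Then for every (i,k,ℓ) ∈ X̃_diff, if D(i,k,ℓ) ≥ 0 then D(i,k,ℓ) ≤ (i − y_k)·c + b. -/
/-- Overall service rate `d(k,ℓ) = k·μ₁ + min(ℓ,C₂)·μ₂`. -/
noncomputable def dRate (C₂ : ℕ) (μ₁ μ₂ : ℝ) (k ℓ : ℕ) : ℝ :=
  (k : ℝ) * μ₁ + ((min ℓ C₂ : ℕ) : ℝ) * μ₂

/-- Membership of `(i,k,ℓ)` in the state space `X`. -/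
def memX (C₁ : ℕ) (i k ℓ : ℕ) : Prop :=
  (i = 0 ∧ k + ℓ < C₁) ∨ k + ℓ = C₁

/-- `v` satisfies the optimality (Bellman) equations of the clearing system.
Terms whose coefficient `k·μ₁` or `min(ℓ,C₂)·μ₂` vanishes contribute `0`,
matching the convention that such summands are omitted. -/
def IsValue (C₁ C₂ : ℕ) (μ₁ μ₂ h₀ h₁ h₂ : ℝ) (v : ℕ → ℕ → ℕ → ℝ) : Prop :=
  v 0 0 0 = 0 ∧
  (∀ k ℓ : ℕ, k + ℓ ≤ C₁ → ¬(k = 0 ∧ ℓ = 0) →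
    v 0 k ℓ = ((k : ℝ) * h₁ + (ℓ : ℝ) * h₂) / dRate C₂ μ₁ μ₂ k ℓ
      + ((k : ℝ) * μ₁ / dRate C₂ μ₁ μ₂ k ℓ) * v 0 (k - 1) ℓ
      + (((min ℓ C₂ : ℕ) : ℝ) * μ₂ / dRate C₂ μ₁ μ₂ k ℓ) * v 0 k (ℓ - 1)) ∧
  (∀ i k ℓ : ℕ, k + ℓ = C₁ →
    v (i + 1) k ℓ =
      (((i : ℝ) + 1) * h₀ + (k : ℝ) * h₁ + (ℓ : ℝ) * h₂) / dRate C₂ μ₁ μ₂ k ℓ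
      + ((k : ℝ) * μ₁ / dRate C₂ μ₁ μ₂ k ℓ) *
          min (v i k ℓ) (v i (k - 1) (ℓ + 1))
      + (((min ℓ C₂ : ℕ) : ℝ) * μ₂ / dRate C₂ μ₁ μ₂ k ℓ) *
          min (v i (k + 1) (ℓ - 1)) (v i k ℓ))

/-- The difference `D(i,k,ℓ) = v(i,k,ℓ) − v(i,k−1,ℓ+1)`. -/
noncomputable def Dv (v : ℕ → ℕ → ℕ → ℝ) (i k ℓ : ℕ) : ℝ :=
  v i k ℓ - v i (k - 1) (ℓ + 1)



lemma star_ineq (q1 q2 q3 q4 a a1 a2 w : ℝ)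
    (hq2 : 0 ≤ q2) (hq3 : 0 ≤ q3) (hq4 : 0 ≤ q4)
    (h12 : q1 + q2 = 1) (h34 : q3 + q4 = 1) :
    (q1 * min a a1 + q2 * min w a) - (q3 * min a1 a2 + q4 * min a a1)
      ≤ q2 * max (a - a1) 0 + q3 * max (a1 - a2) 0 := by
  have hw : q2 * min w a ≤ q2 * a := mul_le_mul_of_nonneg_left (min_le_right w a) hq2
  have e1 : q1 * a + q2 * a = a := by linear_combination a * h12
  have e1' : q1 * a1 + q2 * a1 = a1 := by linear_combination a1 * h12
  have e2 : q3 * a + q4 * a = a := by linear_combination a * h34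
  have e2' : q3 * a1 + q4 * a1 = a1 := by linear_combination a1 * h34
  rcases le_total a a1 with h | h <;> rcases le_total a1 a2 with h' | h'
  · rw [min_eq_left h, min_eq_left h', max_eq_right (by linarith : a - a1 ≤ 0),
      max_eq_right (by linarith : a1 - a2 ≤ 0)]
    have h3 : q3 * a ≤ q3 * a1 := mul_le_mul_of_nonneg_left h hq3
    linarith
  · rw [min_eq_left h, min_eq_right h', max_eq_right (by linarith : a - a1 ≤ 0),
      max_eq_left (by linarith : 0 ≤ a1 - a2)]
    have h3 : q3 * a ≤ q3 * a1 := mul_le_mul_of_nonneg_left h hq3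
    have e3 : q3 * (a1 - a2) = q3 * a1 - q3 * a2 := by ring
    linarith
  · rw [min_eq_right h, min_eq_left h', max_eq_left (by linarith : 0 ≤ a - a1),
      max_eq_right (by linarith : a1 - a2 ≤ 0)]
    have e4 : q2 * (a - a1) = q2 * a - q2 * a1 := by ring
    linarith
  · rw [min_eq_right h, min_eq_right h', max_eq_left (by linarith : 0 ≤ a - a1),
      max_eq_left (by linarith : 0 ≤ a1 - a2)]
    have e4 : q2 * (a - a1) = q2 * a - q2 * a1 := by ring
    have e5 : q3 * (a1 - a2) = q3 * a1 - q3 * a2 := by ring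
    linarith

lemma keyA0 (μ₁ μ₂ h₁ h₂ K L S S' : ℝ)
    (hμ₂ : 0 < μ₂) (hμ : μ₂ < μ₁) (hh₂ : 0 < h₂)
    (hK : 1 ≤ K) (hL : 0 ≤ L)
    (hcase : (S = L ∧ S' = L + 1) ∨ (S' = S ∧ 1 ≤ S ∧ S ≤ L)) :
    (K * h₁ + L * h₂) / (K * μ₁ + S * μ₂)
      - ((K - 1) * h₁ + (L + 1) * h₂) / ((K - 1) * μ₁ + S' * μ₂)
      ≤ (K * μ₁ / (K * μ₁ + S * μ₂) - (K - 1) * μ₁ / ((K - 1) * μ₁ + S' * μ₂))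
          * (h₁ / μ₁ - h₂ / μ₂) := by
  have hμ₁ : 0 < μ₁ := lt_trans hμ₂ hμ
  have hS : 0 ≤ S := by rcases hcase with ⟨h1, _⟩ | ⟨_, h2, _⟩ <;> linarith
  have hS' : 1 ≤ S' := by rcases hcase with ⟨_, h2⟩ | ⟨h1, h2, h3⟩ <;> [skip; rw [h1]] <;> linarith
  have hd : 0 < K * μ₁ + S * μ₂ := by nlinarith
  have hd' : 0 < (K - 1) * μ₁ + S' * μ₂ := by nlinarith
  rw [← sub_nonneg]
  have key : (K * μ₁ / (K * μ₁ + S * μ₂) - (K - 1) * μ₁ / ((K - 1) * μ₁ + S' * μ₂))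
          * (h₁ / μ₁ - h₂ / μ₂)
      - ((K * h₁ + L * h₂) / (K * μ₁ + S * μ₂)
        - ((K - 1) * h₁ + (L + 1) * h₂) / ((K - 1) * μ₁ + S' * μ₂))
      = h₂ * (-(μ₁ * ((K * S' - (K - 1) * S) - K - L) + μ₂ * (L * S' - (L + 1) * S)))
          / ((K * μ₁ + S * μ₂) * ((K - 1) * μ₁ + S' * μ₂)) := by
    obtain ⟨D, hD⟩ : ∃ D, (K - 1) * μ₁ + S' * μ₂ = D := ⟨_, rfl⟩
    have hD0 : D ≠ 0 := hD ▸ hd'.ne'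
    rw [hD]
    field_simp
    rw [← hD]
    ring
  rw [key]
  apply div_nonneg _ (by positivity)
  rcases hcase with ⟨rfl, rfl⟩ | ⟨hss, h3, h4⟩
  · exact le_of_eq (by ring)
  · subst hss
    have t1 : 0 ≤ μ₁ * (K + L - S') := by nlinarith
    have t2 : 0 ≤ μ₂ * S' := by nlinarith
    nlinarith

lemma keyL1 (μ₁ μ₂ h₀ h₁ h₂ K L S S' M i : ℝ)
    (hμ₂ : 0 < μ₂) (hμ : μ₂ < μ₁) (hh₀ : 0 < h₀) (hh₂ : 0 < h₂)
    (hK : 1 ≤ K) (hL : 0 ≤ L) (hi : 0 ≤ i) (hM : M = K + L)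
    (hcase : (S = L ∧ S' = L + 1) ∨ (S' = S ∧ 1 ≤ S ∧ S ≤ L)) :
    ((i + 1) * h₀ + K * h₁ + L * h₂) / (K * μ₁ + S * μ₂)
      - ((i + 1) * h₀ + (K - 1) * h₁ + (L + 1) * h₂) / ((K - 1) * μ₁ + S' * μ₂)
      + (S * μ₂ / (K * μ₁ + S * μ₂)) *
          ((i - ((K - 1) + S * (μ₂ / μ₁))) * (h₀ / M * (1 / μ₁ - 1 / μ₂)) + (h₁ / μ₁ - h₂ / μ₂))
      + ((K - 1) * μ₁ / ((K - 1) * μ₁ + S' * μ₂)) *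
          ((i - ((K - 2) + S' * (μ₂ / μ₁))) * (h₀ / M * (1 / μ₁ - 1 / μ₂)) + (h₁ / μ₁ - h₂ / μ₂))
      ≤ ((i + 1) - ((K - 1) + S * (μ₂ / μ₁))) * (h₀ / M * (1 / μ₁ - 1 / μ₂))
          + (h₁ / μ₁ - h₂ / μ₂) := by
  subst hM
  have hμ₁ : 0 < μ₁ := lt_trans hμ₂ hμ
  have hS : 0 ≤ S := by rcases hcase with ⟨h1, _⟩ | ⟨_, h2, _⟩ <;> linarith
  have hS' : 1 ≤ S' := by rcases hcase with ⟨_, h2⟩ | ⟨h1, h2, h3⟩ <;> [skip; rw [h1]] <;> linarith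
  have hd : 0 < K * μ₁ + S * μ₂ := by nlinarith
  have hd' : 0 < (K - 1) * μ₁ + S' * μ₂ := by nlinarith
  have hKL : 0 < K + L := by linarith
  rw [← sub_nonneg]
  have key : ((i + 1) - ((K - 1) + S * (μ₂ / μ₁))) * (h₀ / (K + L) * (1 / μ₁ - 1 / μ₂))
          + (h₁ / μ₁ - h₂ / μ₂)
      - (((i + 1) * h₀ + K * h₁ + L * h₂) / (K * μ₁ + S * μ₂)
        - ((i + 1) * h₀ + (K - 1) * h₁ + (L + 1) * h₂) / ((K - 1) * μ₁ + S' * μ₂)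
        + (S * μ₂ / (K * μ₁ + S * μ₂)) *
            ((i - ((K - 1) + S * (μ₂ / μ₁))) * (h₀ / (K + L) * (1 / μ₁ - 1 / μ₂)) + (h₁ / μ₁ - h₂ / μ₂))
        + ((K - 1) * μ₁ / ((K - 1) * μ₁ + S' * μ₂)) *
            ((i - ((K - 2) + S' * (μ₂ / μ₁))) * (h₀ / (K + L) * (1 / μ₁ - 1 / μ₂)) + (h₁ / μ₁ - h₂ / μ₂)))
      = ((K + L) * h₂ * (-(μ₁ * ((K * S' - (K - 1) * S) - K - L) + μ₂ * (L * S' - (L + 1) * S)))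
          + (i + 1) * h₀ * ((K + L) * (μ₁ + S * μ₂ - S' * μ₂) - (μ₁ - μ₂) * (K * S' - (K - 1) * S)))
        / ((K * μ₁ + S * μ₂) * (((K - 1) * μ₁ + S' * μ₂) * (K + L))) := by
    obtain ⟨D, hD⟩ : ∃ D, (K - 1) * μ₁ + S' * μ₂ = D := ⟨_, rfl⟩
    have hD0 : D ≠ 0 := hD ▸ hd'.ne'
    rw [hD]
    field_simp
    rw [← hD]
    ring
  rw [key]
  apply div_nonneg _ (by positivity)
  rcases hcase with ⟨rfl, rfl⟩ | ⟨hss, h3, h4⟩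
  · exact le_of_eq (by ring)
  · subst hss
    have t1 : 0 ≤ (K + L) * h₂ * (μ₁ * (K + L - S') + μ₂ * S') := by
      have : 0 ≤ μ₁ * (K + L - S') + μ₂ * S' := by nlinarith
      positivity
    have t2 : 0 ≤ (i + 1) * h₀ * ((K + L) * μ₁ - (μ₁ - μ₂) * S') := by
      have : 0 ≤ (K + L) * μ₁ - (μ₁ - μ₂) * S' := by nlinarith
      positivity
    have e : (K + L) * h₂ * (-(μ₁ * ((K * S' - (K - 1) * S') - K - L) + μ₂ * (L * S' - (L + 1) * S')))
          + (i + 1) * h₀ * ((K + L) * (μ₁ + S' * μ₂ - S' * μ₂) - (μ₁ - μ₂) * (K * S' - (K - 1) * S'))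
        = (K + L) * h₂ * (μ₁ * (K + L - S') + μ₂ * S')
          + (i + 1) * h₀ * ((K + L) * μ₁ - (μ₁ - μ₂) * S') := by ring
    rw [e]
    exact add_nonneg t1 t2

set_option maxHeartbeats 3000000 in
lemma keyL2 (μ₁ μ₂ h₀ h₁ h₂ K L S S' M i : ℝ)
    (hμ₂ : 0 < μ₂) (hμ : μ₂ < μ₁) (hh₀ : 0 < h₀) (hh₂ : 0 < h₂)
    (hK : 1 ≤ K) (hL : 0 ≤ L) (hi : 0 ≤ i) (hM : M = K + L)
    (hcase : (S = L ∧ S' = L + 1) ∨ (S' = S ∧ 1 ≤ S ∧ S ≤ L))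
    (hB1 : (i - ((K - 2) + S' * (μ₂ / μ₁))) * (h₀ / M * (1 / μ₁ - 1 / μ₂))
        + (h₁ / μ₁ - h₂ / μ₂) < 0) :
    ((i + 1) * h₀ + K * h₁ + L * h₂) / (K * μ₁ + S * μ₂)
      - ((i + 1) * h₀ + (K - 1) * h₁ + (L + 1) * h₂) / ((K - 1) * μ₁ + S' * μ₂)
      + (S * μ₂ / (K * μ₁ + S * μ₂)) *
          max ((i - ((K - 1) + S * (μ₂ / μ₁))) * (h₀ / M * (1 / μ₁ - 1 / μ₂))
                + (h₁ / μ₁ - h₂ / μ₂)) 0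
      < 0 := by
  subst hM
  have hμ₁ : 0 < μ₁ := lt_trans hμ₂ hμ
  have hδ : 0 < μ₁ - μ₂ := by linarith
  have hS : 0 ≤ S := by rcases hcase with ⟨h1, _⟩ | ⟨_, h2, _⟩ <;> linarith
  have hS' : 1 ≤ S' := by rcases hcase with ⟨_, h2⟩ | ⟨h1, h2, h3⟩ <;> [skip; rw [h1]] <;> linarith
  have hd : 0 < K * μ₁ + S * μ₂ := by nlinarith
  have hd' : 0 < (K - 1) * μ₁ + S' * μ₂ := by nlinarith
  have hKL : 0 < K + L := by linarith
  have hcn : 0 < h₀ * (μ₁ - μ₂) / ((K + L) * μ₁ * μ₂) :=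
    div_pos (mul_pos hh₀ hδ) (by positivity)
  have hgap : 0 < K * μ₁ + S * μ₂ - ((K - 1) * μ₁ + S' * μ₂) := by
    rcases hcase with ⟨rfl, rfl⟩ | ⟨hss, h3, h4⟩
    · nlinarith
    · rw [hss]; nlinarith
  have hσ : 1 ≤ K * S' - (K - 1) * S := by
    rcases hcase with ⟨rfl, rfl⟩ | ⟨hss, h3, h4⟩
    · nlinarith
    · rw [hss]; nlinarith
  have h1θ : 0 < K * μ₁ / (K * μ₁ + S * μ₂) - (K - 1) * μ₁ / ((K - 1) * μ₁ + S' * μ₂) := by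
    have eq : K * μ₁ / (K * μ₁ + S * μ₂) - (K - 1) * μ₁ / ((K - 1) * μ₁ + S' * μ₂)
        = μ₁ * μ₂ * (K * S' - (K - 1) * S) / ((K * μ₁ + S * μ₂) * ((K - 1) * μ₁ + S' * μ₂)) := by
      obtain ⟨D, hD⟩ : ∃ D, (K - 1) * μ₁ + S' * μ₂ = D := ⟨_, rfl⟩
      have hD0 : D ≠ 0 := hD ▸ hd'.ne'
      rw [hD]
      field_simp
      rw [← hD]
      ring
    rw [eq]
    exact div_pos (mul_pos (mul_pos hμ₁ hμ₂) (by linarith)) (by positivity)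
  have hq2 : 0 ≤ S * μ₂ / (K * μ₁ + S * μ₂) := by positivity
  have hb : (h₁ / μ₁ - h₂ / μ₂)
      < (i - ((K - 2) + S' * (μ₂ / μ₁))) * (h₀ * (μ₁ - μ₂) / ((K + L) * μ₁ * μ₂)) := by
    have e : (i - ((K - 2) + S' * (μ₂ / μ₁))) * (h₀ / (K + L) * (1 / μ₁ - 1 / μ₂))
        = -((i - ((K - 2) + S' * (μ₂ / μ₁))) * (h₀ * (μ₁ - μ₂) / ((K + L) * μ₁ * μ₂))) := by
      field_simp; ring
    linarith [hB1, e.le, e.ge]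
  have hBkeq : (i - ((K - 1) + S * (μ₂ / μ₁))) * (h₀ / (K + L) * (1 / μ₁ - 1 / μ₂))
        + (h₁ / μ₁ - h₂ / μ₂)
      = ((i - ((K - 2) + S' * (μ₂ / μ₁))) * (h₀ / (K + L) * (1 / μ₁ - 1 / μ₂))
        + (h₁ / μ₁ - h₂ / μ₂))
        + (K * μ₁ + S * μ₂ - ((K - 1) * μ₁ + S' * μ₂)) / μ₁
            * (h₀ * (μ₁ - μ₂) / ((K + L) * μ₁ * μ₂)) := by
    field_simp; ring
  have hmax : max ((i - ((K - 1) + S * (μ₂ / μ₁))) * (h₀ / (K + L) * (1 / μ₁ - 1 / μ₂))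
        + (h₁ / μ₁ - h₂ / μ₂)) 0
      < (K * μ₁ + S * μ₂ - ((K - 1) * μ₁ + S' * μ₂)) / μ₁
          * (h₀ * (μ₁ - μ₂) / ((K + L) * μ₁ * μ₂)) := by
    apply max_lt
    · rw [hBkeq]; linarith
    · exact mul_pos (div_pos hgap hμ₁) hcn
  have hA0 := keyA0 μ₁ μ₂ h₁ h₂ K L S S' hμ₂ hμ hh₂ hK hL hcase
  have hsplit : ((i + 1) * h₀ + K * h₁ + L * h₂) / (K * μ₁ + S * μ₂)
      - ((i + 1) * h₀ + (K - 1) * h₁ + (L + 1) * h₂) / ((K - 1) * μ₁ + S' * μ₂)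
      = ((K * h₁ + L * h₂) / (K * μ₁ + S * μ₂)
          - ((K - 1) * h₁ + (L + 1) * h₂) / ((K - 1) * μ₁ + S' * μ₂))
        - (i + 1) * h₀ * (K * μ₁ + S * μ₂ - ((K - 1) * μ₁ + S' * μ₂))
            / ((K * μ₁ + S * μ₂) * ((K - 1) * μ₁ + S' * μ₂)) := by
    obtain ⟨D, hD⟩ : ∃ D, (K - 1) * μ₁ + S' * μ₂ = D := ⟨_, rfl⟩
    have hD0 : D ≠ 0 := hD ▸ hd'.ne'
    rw [hD]
    field_simp
    rw [← hD]
    ring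
  have hfin : (K * μ₁ / (K * μ₁ + S * μ₂) - (K - 1) * μ₁ / ((K - 1) * μ₁ + S' * μ₂)) *
        ((i - ((K - 2) + S' * (μ₂ / μ₁))) * (h₀ * (μ₁ - μ₂) / ((K + L) * μ₁ * μ₂)))
      + (S * μ₂ / (K * μ₁ + S * μ₂)) *
          ((K * μ₁ + S * μ₂ - ((K - 1) * μ₁ + S' * μ₂)) / μ₁
            * (h₀ * (μ₁ - μ₂) / ((K + L) * μ₁ * μ₂)))
      - (i + 1) * h₀ * (K * μ₁ + S * μ₂ - ((K - 1) * μ₁ + S' * μ₂))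
          / ((K * μ₁ + S * μ₂) * ((K - 1) * μ₁ + S' * μ₂)) ≤ 0 := by
    have keyid : (K * μ₁ / (K * μ₁ + S * μ₂) - (K - 1) * μ₁ / ((K - 1) * μ₁ + S' * μ₂)) *
        ((i - ((K - 2) + S' * (μ₂ / μ₁))) * (h₀ * (μ₁ - μ₂) / ((K + L) * μ₁ * μ₂)))
      + (S * μ₂ / (K * μ₁ + S * μ₂)) *
          ((K * μ₁ + S * μ₂ - ((K - 1) * μ₁ + S' * μ₂)) / μ₁
            * (h₀ * (μ₁ - μ₂) / ((K + L) * μ₁ * μ₂)))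
      - (i + 1) * h₀ * (K * μ₁ + S * μ₂ - ((K - 1) * μ₁ + S' * μ₂))
          / ((K * μ₁ + S * μ₂) * ((K - 1) * μ₁ + S' * μ₂))
      = h₀ * ((μ₁ - μ₂) * (μ₁ * (K * S' - (K - 1) * S)
              * (i * μ₁ + μ₁ - ((K - 1) * μ₁ + S' * μ₂))
            + S * ((K - 1) * μ₁ + S' * μ₂)
              * (K * μ₁ + S * μ₂ - ((K - 1) * μ₁ + S' * μ₂)))
          - (i + 1) * (K * μ₁ + S * μ₂ - ((K - 1) * μ₁ + S' * μ₂)) * (K + L) * (μ₁ * μ₁))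
        / ((K + L) * (μ₁ * μ₁) * ((K * μ₁ + S * μ₂) * ((K - 1) * μ₁ + S' * μ₂))) := by
      obtain ⟨D, hD⟩ : ∃ D, (K - 1) * μ₁ + S' * μ₂ = D := ⟨_, rfl⟩
      have hD0 : D ≠ 0 := hD ▸ hd'.ne'
      rw [hD]
      field_simp
      rw [← hD]
      ring
    rw [keyid]
    have hE2 : (μ₁ - μ₂) * (μ₁ * (K * S' - (K - 1) * S)
              * (i * μ₁ + μ₁ - ((K - 1) * μ₁ + S' * μ₂))
            + S * ((K - 1) * μ₁ + S' * μ₂)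
              * (K * μ₁ + S * μ₂ - ((K - 1) * μ₁ + S' * μ₂)))
          - (i + 1) * (K * μ₁ + S * μ₂ - ((K - 1) * μ₁ + S' * μ₂)) * (K + L) * (μ₁ * μ₁) ≤ 0 := by
      rcases hcase with ⟨rfl, rfl⟩ | ⟨hss, h3, h4⟩
      · have t : S * (μ₁ - μ₂) - (K + S) * μ₁ ≤ 0 := by nlinarith
        nlinarith [mul_nonpos_of_nonneg_of_nonpos (mul_nonneg hδ.le hd'.le) t]
      · rw [hss]
        have t : (μ₁ - μ₂) * S - (K + L) * μ₁ ≤ 0 := by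
          nlinarith [mul_nonneg hμ₂.le (by linarith : (0:ℝ) ≤ S),
            mul_le_mul_of_nonneg_right (show S ≤ K + L by linarith) hμ₁.le]
        nlinarith [mul_nonpos_of_nonneg_of_nonpos
          (mul_nonneg (mul_nonneg (by linarith : (0:ℝ) ≤ i + 1) hμ₁.le) hμ₁.le) t]
    exact div_nonpos_iff.mpr (Or.inr ⟨mul_nonpos_of_nonneg_of_nonpos hh₀.le hE2, by positivity⟩)
  have s3 : (K * μ₁ / (K * μ₁ + S * μ₂) - (K - 1) * μ₁ / ((K - 1) * μ₁ + S' * μ₂)) *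
        (h₁ / μ₁ - h₂ / μ₂)
      < (K * μ₁ / (K * μ₁ + S * μ₂) - (K - 1) * μ₁ / ((K - 1) * μ₁ + S' * μ₂)) *
        ((i - ((K - 2) + S' * (μ₂ / μ₁))) * (h₀ * (μ₁ - μ₂) / ((K + L) * μ₁ * μ₂))) :=
    mul_lt_mul_of_pos_left hb h1θ
  have s4 : (S * μ₂ / (K * μ₁ + S * μ₂)) *
        max ((i - ((K - 1) + S * (μ₂ / μ₁))) * (h₀ / (K + L) * (1 / μ₁ - 1 / μ₂))
              + (h₁ / μ₁ - h₂ / μ₂)) 0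
      ≤ (S * μ₂ / (K * μ₁ + S * μ₂)) *
          ((K * μ₁ + S * μ₂ - ((K - 1) * μ₁ + S' * μ₂)) / μ₁
            * (h₀ * (μ₁ - μ₂) / ((K + L) * μ₁ * μ₂))) :=
    mul_le_mul_of_nonneg_left hmax.le hq2
  linarith [hsplit, hA0, s3, s4, hfin]

lemma minCase (C₂ k ℓ : ℕ) (μ₁ μ₂ : ℝ) (hC₂ : 1 ≤ C₂) :
    (((min ℓ C₂ : ℕ) : ℝ) = (ℓ : ℝ) ∧ ((min (ℓ+1) C₂ : ℕ) : ℝ) = (ℓ : ℝ) + 1) ∨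
      (((min (ℓ+1) C₂ : ℕ) : ℝ) = ((min ℓ C₂ : ℕ) : ℝ) ∧ 1 ≤ ((min ℓ C₂ : ℕ) : ℝ) ∧
        ((min ℓ C₂ : ℕ) : ℝ) ≤ (ℓ : ℝ)) := by
  rcases lt_or_ge ℓ C₂ with h | h
  · left
    constructor
    · exact_mod_cast congrArg Nat.cast (min_eq_left (Nat.le_of_lt h))
    · have : min (ℓ+1) C₂ = ℓ + 1 := min_eq_left (by omega)
      rw [this]; push_cast; ring
  · right
    have h1 : min ℓ C₂ = C₂ := min_eq_right h
    have h2 : min (ℓ+1) C₂ = C₂ := min_eq_right (by omega)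
    rw [h1, h2]
    refine ⟨rfl, by exact_mod_cast hC₂, by exact_mod_cast h⟩

lemma baseCase (C₁ C₂ : ℕ) (μ₁ μ₂ h₀ h₁ h₂ : ℝ)
    (hμ₂ : 0 < μ₂) (hμ : μ₂ < μ₁) (hh₂ : 0 < h₂) (hC₂ : 1 ≤ C₂)
    (v : ℕ → ℕ → ℕ → ℝ) (hv : IsValue C₁ C₂ μ₁ μ₂ h₀ h₁ h₂ v) :
    ∀ n k ℓ : ℕ, 1 ≤ k → k + ℓ = n → n ≤ C₁ →
      v 0 k ℓ - v 0 (k - 1) (ℓ + 1) ≤ h₁ / μ₁ - h₂ / μ₂ := by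
  have hμ₁ : 0 < μ₁ := lt_trans hμ₂ hμ
  intro n
  induction n with
  | zero => intro k ℓ hk hsum _; omega
  | succ n ih =>
    intro k ℓ hk hsum hle
    obtain ⟨-, h0eq, -⟩ := hv
    have e1 := h0eq k ℓ (by omega) (by omega)
    have e2 := h0eq (k - 1) (ℓ + 1) (by omega) (by omega)
    simp only [Nat.add_sub_cancel, dRate] at e1 e2
    have c1 : ((k - 1 : ℕ) : ℝ) = (k : ℝ) - 1 := by
      have := Nat.cast_sub (R := ℝ) hk; simpa using this
    have c2 : ((ℓ + 1 : ℕ) : ℝ) = (ℓ : ℝ) + 1 := by push_cast; ring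
    rw [c1, c2] at e2
    set S : ℝ := ((min ℓ C₂ : ℕ) : ℝ) with hSdef
    set S' : ℝ := ((min (ℓ+1) C₂ : ℕ) : ℝ) with hS'def
    set K : ℝ := (k : ℝ) with hKdef
    set L : ℝ := (ℓ : ℝ) with hLdef
    have hcase := minCase C₂ k ℓ μ₁ μ₂ hC₂
    rw [← hSdef, ← hS'def, ← hLdef] at hcase
    have hK : 1 ≤ K := by rw [hKdef]; exact_mod_cast hk
    have hL : 0 ≤ L := by positivity
    have hS : 0 ≤ S := by rcases hcase with ⟨h1, _⟩ | ⟨_, h2, _⟩ <;> linarith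
    have hS'1 : 1 ≤ S' := by
      rcases hcase with ⟨_, h2⟩ | ⟨h1, h2, h3⟩ <;> [skip; rw [h1]] <;> linarith
    have hd : 0 < K * μ₁ + S * μ₂ := by nlinarith
    have hd' : 0 < (K - 1) * μ₁ + S' * μ₂ := by nlinarith
    have hA0 := keyA0 μ₁ μ₂ h₁ h₂ K L S S' hμ₂ hμ hh₂ hK hL hcase
    -- bounds on the two lower-level differences
    have m1 : (S * μ₂ / (K * μ₁ + S * μ₂)) * (v 0 k (ℓ - 1) - v 0 (k - 1) ℓ)
        ≤ (S * μ₂ / (K * μ₁ + S * μ₂)) * (h₁ / μ₁ - h₂ / μ₂) := by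
      rcases Nat.eq_zero_or_pos ℓ with h | h
      · have : S = 0 := by rw [hSdef, h]; simp
        rw [this]; simp
      · have hu := ih k (ℓ - 1) hk (by omega) (by omega)
        have : ℓ - 1 + 1 = ℓ := by omega
        rw [this] at hu
        exact mul_le_mul_of_nonneg_left hu (div_nonneg (mul_nonneg hS hμ₂.le) hd.le)
    have m2 : ((K - 1) * μ₁ / ((K - 1) * μ₁ + S' * μ₂)) * (v 0 (k - 1) ℓ - v 0 (k - 1 - 1) (ℓ + 1))
        ≤ ((K - 1) * μ₁ / ((K - 1) * μ₁ + S' * μ₂)) * (h₁ / μ₁ - h₂ / μ₂) := by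
      rcases Nat.lt_or_ge k 2 with h | h
      · have hk1 : k = 1 := by omega
        have : K - 1 = 0 := by rw [hKdef, hk1]; norm_num
        rw [this]; simp
      · have hu := ih (k - 1) ℓ (by omega) (by omega) (by omega)
        exact mul_le_mul_of_nonneg_left hu
          (div_nonneg (mul_nonneg (by linarith : (0:ℝ) ≤ K - 1) hμ₁.le) hd'.le)
    -- coefficient identities
    have rb1 : (K * μ₁ / (K * μ₁ + S * μ₂)) * (h₁ / μ₁ - h₂ / μ₂)
        + (S * μ₂ / (K * μ₁ + S * μ₂)) * (h₁ / μ₁ - h₂ / μ₂) = (h₁ / μ₁ - h₂ / μ₂) := by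
      field_simp
    have rx1 : (K * μ₁ / (K * μ₁ + S * μ₂)) * v 0 (k - 1) ℓ
        + (S * μ₂ / (K * μ₁ + S * μ₂)) * v 0 (k - 1) ℓ
        - ((K - 1) * μ₁ / ((K - 1) * μ₁ + S' * μ₂)) * v 0 (k - 1) ℓ
        - (S' * μ₂ / ((K - 1) * μ₁ + S' * μ₂)) * v 0 (k - 1) ℓ = 0 := by
      have c3 : K * μ₁ / (K * μ₁ + S * μ₂) + S * μ₂ / (K * μ₁ + S * μ₂) = 1 := by field_simp
      have c4 : (K - 1) * μ₁ / ((K - 1) * μ₁ + S' * μ₂)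
          + S' * μ₂ / ((K - 1) * μ₁ + S' * μ₂) = 1 := by field_simp
      linear_combination (v 0 (k - 1) ℓ) * c3 - (v 0 (k - 1) ℓ) * c4
    have r1 : (S * μ₂ / (K * μ₁ + S * μ₂)) * (v 0 k (ℓ - 1) - v 0 (k - 1) ℓ)
        = (S * μ₂ / (K * μ₁ + S * μ₂)) * v 0 k (ℓ - 1)
          - (S * μ₂ / (K * μ₁ + S * μ₂)) * v 0 (k - 1) ℓ := by ring
    have r2 : ((K - 1) * μ₁ / ((K - 1) * μ₁ + S' * μ₂)) * (v 0 (k - 1) ℓ - v 0 (k - 1 - 1) (ℓ + 1))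
        = ((K - 1) * μ₁ / ((K - 1) * μ₁ + S' * μ₂)) * v 0 (k - 1) ℓ
          - ((K - 1) * μ₁ / ((K - 1) * μ₁ + S' * μ₂)) * v 0 (k - 1 - 1) (ℓ + 1) := by ring
    have rA : (K * μ₁ / (K * μ₁ + S * μ₂) - (K - 1) * μ₁ / ((K - 1) * μ₁ + S' * μ₂))
          * (h₁ / μ₁ - h₂ / μ₂)
        = (K * μ₁ / (K * μ₁ + S * μ₂)) * (h₁ / μ₁ - h₂ / μ₂)
          - ((K - 1) * μ₁ / ((K - 1) * μ₁ + S' * μ₂)) * (h₁ / μ₁ - h₂ / μ₂) := by ring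
    have rb2 : ((K - 1) * μ₁ / ((K - 1) * μ₁ + S' * μ₂)) * (h₁ / μ₁ - h₂ / μ₂)
        + (S' * μ₂ / ((K - 1) * μ₁ + S' * μ₂)) * (h₁ / μ₁ - h₂ / μ₂) = (h₁ / μ₁ - h₂ / μ₂) := by
      field_simp
    rw [e1, e2]
    linarith [hA0, m1, m2, rb1, rb2, rx1, r1, r2, rA]

set_option maxHeartbeats 2000000 in
theorem stmt14
    (C₁ C₂ : ℕ) (hC₂pos : 1 ≤ C₂) (hC : C₂ < C₁)
    (μ₁ μ₂ h₀ h₁ h₂ : ℝ)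
    (hμ₁ : 0 < μ₁) (hμ₂ : 0 < μ₂)
    (hh₀ : 0 < h₀) (hh₁ : 0 < h₁) (hh₂ : 0 < h₂)
    (v : ℕ → ℕ → ℕ → ℝ) (hv : IsValue C₁ C₂ μ₁ μ₂ h₀ h₁ h₂ v)
    (hμ : μ₂ < μ₁) :
    ∀ i k ℓ : ℕ, k + ℓ = C₁ → 1 ≤ k → 0 ≤ Dv v i k ℓ →
      Dv v i k ℓ ≤
        ((i : ℝ) - (((k : ℝ) - 1) + ((min ℓ C₂ : ℕ) : ℝ) * (μ₂ / μ₁))) *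
            (h₀ / (C₁ : ℝ) * (1 / μ₁ - 1 / μ₂))
          + (h₁ / μ₁ - h₂ / μ₂) := by

  intro i
  induction i with
  | zero =>
    intro k ℓ hkl hk _
    have hb := baseCase C₁ C₂ μ₁ μ₂ h₀ h₁ h₂ hμ₂ hμ hh₂ hC₂pos v hv C₁ k ℓ hk hkl le_rfl
    simp only [Dv, Nat.cast_zero]
    have hC₁pos : 0 < (C₁ : ℝ) := by
      have : 0 < C₁ := by omega
      exact_mod_cast this
    have hμ₁ : 0 < μ₁ := lt_trans hμ₂ hμ
    have hcle : h₀ / (C₁ : ℝ) * (1 / μ₁ - 1 / μ₂) ≤ 0 := by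
      apply mul_nonpos_of_nonneg_of_nonpos (by positivity)
      have : 1 / μ₁ ≤ 1 / μ₂ := one_div_le_one_div_of_le hμ₂ hμ.le
      linarith
    have hK : (1:ℝ) ≤ (k:ℝ) := by exact_mod_cast hk
    have hyk : 0 ≤ ((k:ℝ) - 1) + ((min ℓ C₂ : ℕ) : ℝ) * (μ₂ / μ₁) := by
      have : (0:ℝ) ≤ ((min ℓ C₂ : ℕ) : ℝ) := Nat.cast_nonneg _
      have h2 : 0 ≤ μ₂ / μ₁ := by positivity
      nlinarith
    nlinarith [hb, mul_nonneg hyk (neg_nonneg.mpr hcle)]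
  | succ i ih =>
    intro k ℓ hkl hk hD
    obtain ⟨-, -, hrec⟩ := hv
    have hμ₁ : 0 < μ₁ := lt_trans hμ₂ hμ
    have hC₁pos : 0 < (C₁ : ℝ) := by
      have : 0 < C₁ := by omega
      exact_mod_cast this
    have hK : (1:ℝ) ≤ (k:ℝ) := by exact_mod_cast hk
    have hL : (0:ℝ) ≤ (ℓ:ℝ) := Nat.cast_nonneg _
    have hC1cast : (C₁ : ℝ) = (k:ℝ) + (ℓ:ℝ) := by
      rw [← hkl]; push_cast; ring
    have hcase := minCase C₂ k ℓ μ₁ μ₂ hC₂pos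
    have hS : (0:ℝ) ≤ ((min ℓ C₂ : ℕ) : ℝ) := Nat.cast_nonneg _
    have hS'1 : (1:ℝ) ≤ ((min (ℓ+1) C₂ : ℕ) : ℝ) := by
      rcases hcase with ⟨_, h2⟩ | ⟨h1, h2, h3⟩ <;> [skip; rw [h1]] <;> linarith
    have hd : 0 < (k:ℝ) * μ₁ + ((min ℓ C₂ : ℕ) : ℝ) * μ₂ := by nlinarith
    have hd' : 0 < ((k:ℝ) - 1) * μ₁ + ((min (ℓ+1) C₂ : ℕ) : ℝ) * μ₂ := by nlinarith
    have c1 : ((k - 1 : ℕ) : ℝ) = (k : ℝ) - 1 := by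
      have := Nat.cast_sub (R := ℝ) hk; simpa using this
    have c2 : ((ℓ + 1 : ℕ) : ℝ) = (ℓ : ℝ) + 1 := by push_cast; ring
    have e1 := hrec i k ℓ hkl
    have e2 := hrec i (k - 1) (ℓ + 1) (by omega)
    rw [show k - 1 + 1 = k from by omega] at e2
    simp only [Nat.add_sub_cancel, dRate] at e1 e2
    rw [c1, c2] at e2
    -- abbreviations (purely notational, all literal)
    have hq1 : 0 ≤ (k:ℝ) * μ₁ / ((k:ℝ) * μ₁ + ((min ℓ C₂ : ℕ) : ℝ) * μ₂) := by positivity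
    have hq2 : 0 ≤ ((min ℓ C₂ : ℕ) : ℝ) * μ₂ / ((k:ℝ) * μ₁ + ((min ℓ C₂ : ℕ) : ℝ) * μ₂) := by
      positivity
    have hq3 : 0 ≤ ((k:ℝ) - 1) * μ₁ / (((k:ℝ) - 1) * μ₁ + ((min (ℓ+1) C₂ : ℕ) : ℝ) * μ₂) :=
      div_nonneg (mul_nonneg (by linarith) hμ₁.le) hd'.le
    have hq4 : 0 ≤ ((min (ℓ+1) C₂ : ℕ) : ℝ) * μ₂ / (((k:ℝ) - 1) * μ₁ + ((min (ℓ+1) C₂ : ℕ) : ℝ) * μ₂) := by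
      positivity
    have h12 : (k:ℝ) * μ₁ / ((k:ℝ) * μ₁ + ((min ℓ C₂ : ℕ) : ℝ) * μ₂)
        + ((min ℓ C₂ : ℕ) : ℝ) * μ₂ / ((k:ℝ) * μ₁ + ((min ℓ C₂ : ℕ) : ℝ) * μ₂) = 1 := by
      rw [← add_div, div_self hd.ne']
    have h34 : ((k:ℝ) - 1) * μ₁ / (((k:ℝ) - 1) * μ₁ + ((min (ℓ+1) C₂ : ℕ) : ℝ) * μ₂)
        + ((min (ℓ+1) C₂ : ℕ) : ℝ) * μ₂ / (((k:ℝ) - 1) * μ₁ + ((min (ℓ+1) C₂ : ℕ) : ℝ) * μ₂) = 1 := by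
      rw [← add_div, div_self hd'.ne']
    have hstar := star_ineq
      ((k:ℝ) * μ₁ / ((k:ℝ) * μ₁ + ((min ℓ C₂ : ℕ) : ℝ) * μ₂))
      (((min ℓ C₂ : ℕ) : ℝ) * μ₂ / ((k:ℝ) * μ₁ + ((min ℓ C₂ : ℕ) : ℝ) * μ₂))
      (((k:ℝ) - 1) * μ₁ / (((k:ℝ) - 1) * μ₁ + ((min (ℓ+1) C₂ : ℕ) : ℝ) * μ₂))
      (((min (ℓ+1) C₂ : ℕ) : ℝ) * μ₂ / (((k:ℝ) - 1) * μ₁ + ((min (ℓ+1) C₂ : ℕ) : ℝ) * μ₂))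
      (v i k ℓ) (v i (k-1) (ℓ+1)) (v i (k-1-1) (ℓ+1+1)) (v i (k+1) (ℓ-1))
      hq2 hq3 hq4 h12 h34
    simp only [Dv] at ih hD ⊢
    have key : v (i+1) k ℓ - v (i+1) (k-1) (ℓ+1)
        ≤ (((i:ℝ) + 1) * h₀ + (k:ℝ) * h₁ + (ℓ:ℝ) * h₂)
              / ((k:ℝ) * μ₁ + ((min ℓ C₂ : ℕ) : ℝ) * μ₂)
          - (((i:ℝ) + 1) * h₀ + ((k:ℝ) - 1) * h₁ + ((ℓ:ℝ) + 1) * h₂)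
              / (((k:ℝ) - 1) * μ₁ + ((min (ℓ+1) C₂ : ℕ) : ℝ) * μ₂)
          + (((min ℓ C₂ : ℕ) : ℝ) * μ₂ / ((k:ℝ) * μ₁ + ((min ℓ C₂ : ℕ) : ℝ) * μ₂))
              * max (v i k ℓ - v i (k-1) (ℓ+1)) 0
          + (((k:ℝ) - 1) * μ₁ / (((k:ℝ) - 1) * μ₁ + ((min (ℓ+1) C₂ : ℕ) : ℝ) * μ₂))
              * max (v i (k-1) (ℓ+1) - v i (k-1-1) (ℓ+1+1)) 0 := by
      rw [e1, e2]; linarith [hstar]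
    have maxDk : max (v i k ℓ - v i (k-1) (ℓ+1)) 0
        ≤ max (((i:ℝ) - (((k:ℝ) - 1) + ((min ℓ C₂ : ℕ) : ℝ) * (μ₂ / μ₁)))
              * (h₀ / (C₁ : ℝ) * (1 / μ₁ - 1 / μ₂)) + (h₁ / μ₁ - h₂ / μ₂)) 0 := by
      rcases le_or_gt 0 (v i k ℓ - v i (k-1) (ℓ+1)) with h | h
      · exact max_le ((ih k ℓ hkl hk h).trans (le_max_left _ _)) (le_max_right _ _)
      · exact max_le (by linarith [le_max_right (((i:ℝ) - (((k:ℝ) - 1)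
            + ((min ℓ C₂ : ℕ) : ℝ) * (μ₂ / μ₁)))
            * (h₀ / (C₁ : ℝ) * (1 / μ₁ - 1 / μ₂)) + (h₁ / μ₁ - h₂ / μ₂)) 0])
          (le_max_right _ _)
    rcases lt_or_ge (((i:ℝ) - (((k:ℝ) - 2) + ((min (ℓ+1) C₂ : ℕ) : ℝ) * (μ₂ / μ₁)))
          * (h₀ / (C₁ : ℝ) * (1 / μ₁ - 1 / μ₂)) + (h₁ / μ₁ - h₂ / μ₂)) 0 with hB1 | hB1
    · -- Bk1 < 0 : contradiction with hD
      exfalso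
      have ht3 : (((k:ℝ) - 1) * μ₁ / (((k:ℝ) - 1) * μ₁ + ((min (ℓ+1) C₂ : ℕ) : ℝ) * μ₂))
          * max (v i (k-1) (ℓ+1) - v i (k-1-1) (ℓ+1+1)) 0 = 0 := by
        rcases Nat.lt_or_ge k 2 with hk2 | hk2
        · have hk1 : k = 1 := by omega
          have hK1 : (k:ℝ) = 1 := by rw [hk1]; norm_num
          rw [hK1]; norm_num
        · have hneg : v i (k-1) (ℓ+1) - v i (k-1-1) (ℓ+1+1) < 0 := by
            by_contra hcon
            push_neg at hcon
            have hik1 := ih (k-1) (ℓ+1) (by omega) (by omega) hcon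
            rw [c1] at hik1
            have ebridge : ((i:ℝ) - (((k:ℝ) - 1 - 1) + ((min (ℓ+1) C₂ : ℕ) : ℝ) * (μ₂ / μ₁)))
                * (h₀ / (C₁ : ℝ) * (1 / μ₁ - 1 / μ₂)) + (h₁ / μ₁ - h₂ / μ₂)
              = ((i:ℝ) - (((k:ℝ) - 2) + ((min (ℓ+1) C₂ : ℕ) : ℝ) * (μ₂ / μ₁)))
                * (h₀ / (C₁ : ℝ) * (1 / μ₁ - 1 / μ₂)) + (h₁ / μ₁ - h₂ / μ₂) := by ring
            linarith [hik1, ebridge.le, ebridge.ge]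
          rw [max_eq_right hneg.le, mul_zero]
      have hL2 := keyL2 μ₁ μ₂ h₀ h₁ h₂ ((k:ℝ)) ((ℓ:ℝ)) (((min ℓ C₂ : ℕ) : ℝ))
        (((min (ℓ+1) C₂ : ℕ) : ℝ)) ((C₁:ℝ)) ((i:ℝ)) hμ₂ hμ hh₀ hh₂ hK hL
        (Nat.cast_nonneg i) hC1cast hcase hB1
      have ht2 := mul_le_mul_of_nonneg_left maxDk hq2
      linarith [hD, key, ht2, ht3, hL2]
    · -- Bk1 ≥ 0
      have hgap : 0 < (k:ℝ) * μ₁ + ((min ℓ C₂ : ℕ) : ℝ) * μ₂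
          - (((k:ℝ) - 1) * μ₁ + ((min (ℓ+1) C₂ : ℕ) : ℝ) * μ₂) := by
        rcases hcase with ⟨h1, h2⟩ | ⟨h1, h2, h3⟩ <;> rw [h1] <;> [rw [h2]; skip] <;> nlinarith
      have hmono : ((i:ℝ) - (((k:ℝ) - 2) + ((min (ℓ+1) C₂ : ℕ) : ℝ) * (μ₂ / μ₁)))
            * (h₀ / (C₁ : ℝ) * (1 / μ₁ - 1 / μ₂)) + (h₁ / μ₁ - h₂ / μ₂)
          ≤ ((i:ℝ) - (((k:ℝ) - 1) + ((min ℓ C₂ : ℕ) : ℝ) * (μ₂ / μ₁)))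
            * (h₀ / (C₁ : ℝ) * (1 / μ₁ - 1 / μ₂)) + (h₁ / μ₁ - h₂ / μ₂) := by
        have e : ((i:ℝ) - (((k:ℝ) - 1) + ((min ℓ C₂ : ℕ) : ℝ) * (μ₂ / μ₁)))
              * (h₀ / (C₁ : ℝ) * (1 / μ₁ - 1 / μ₂)) + (h₁ / μ₁ - h₂ / μ₂)
            - (((i:ℝ) - (((k:ℝ) - 2) + ((min (ℓ+1) C₂ : ℕ) : ℝ) * (μ₂ / μ₁)))
              * (h₀ / (C₁ : ℝ) * (1 / μ₁ - 1 / μ₂)) + (h₁ / μ₁ - h₂ / μ₂))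
            = ((k:ℝ) * μ₁ + ((min ℓ C₂ : ℕ) : ℝ) * μ₂
                - (((k:ℝ) - 1) * μ₁ + ((min (ℓ+1) C₂ : ℕ) : ℝ) * μ₂)) / μ₁
              * (h₀ * (μ₁ - μ₂) / ((C₁:ℝ) * μ₁ * μ₂)) := by
          field_simp
          ring
        have : 0 ≤ ((k:ℝ) * μ₁ + ((min ℓ C₂ : ℕ) : ℝ) * μ₂
                - (((k:ℝ) - 1) * μ₁ + ((min (ℓ+1) C₂ : ℕ) : ℝ) * μ₂)) / μ₁
              * (h₀ * (μ₁ - μ₂) / ((C₁:ℝ) * μ₁ * μ₂)) := by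
          apply mul_nonneg (div_nonneg hgap.le hμ₁.le)
          apply div_nonneg (mul_nonneg hh₀.le (by linarith)) (by positivity)
        linarith [e.le, e.ge]
      have hBk : 0 ≤ ((i:ℝ) - (((k:ℝ) - 1) + ((min ℓ C₂ : ℕ) : ℝ) * (μ₂ / μ₁)))
            * (h₀ / (C₁ : ℝ) * (1 / μ₁ - 1 / μ₂)) + (h₁ / μ₁ - h₂ / μ₂) := le_trans hB1 hmono
      have ht2 : (((min ℓ C₂ : ℕ) : ℝ) * μ₂ / ((k:ℝ) * μ₁ + ((min ℓ C₂ : ℕ) : ℝ) * μ₂))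
            * max (v i k ℓ - v i (k-1) (ℓ+1)) 0
          ≤ (((min ℓ C₂ : ℕ) : ℝ) * μ₂ / ((k:ℝ) * μ₁ + ((min ℓ C₂ : ℕ) : ℝ) * μ₂))
            * (((i:ℝ) - (((k:ℝ) - 1) + ((min ℓ C₂ : ℕ) : ℝ) * (μ₂ / μ₁)))
              * (h₀ / (C₁ : ℝ) * (1 / μ₁ - 1 / μ₂)) + (h₁ / μ₁ - h₂ / μ₂)) := by
        have := mul_le_mul_of_nonneg_left maxDk hq2
        rwa [max_eq_left hBk] at this
      have ht3 : (((k:ℝ) - 1) * μ₁ / (((k:ℝ) - 1) * μ₁ + ((min (ℓ+1) C₂ : ℕ) : ℝ) * μ₂))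
            * max (v i (k-1) (ℓ+1) - v i (k-1-1) (ℓ+1+1)) 0
          ≤ (((k:ℝ) - 1) * μ₁ / (((k:ℝ) - 1) * μ₁ + ((min (ℓ+1) C₂ : ℕ) : ℝ) * μ₂))
            * (((i:ℝ) - (((k:ℝ) - 2) + ((min (ℓ+1) C₂ : ℕ) : ℝ) * (μ₂ / μ₁)))
              * (h₀ / (C₁ : ℝ) * (1 / μ₁ - 1 / μ₂)) + (h₁ / μ₁ - h₂ / μ₂)) := by
        rcases Nat.lt_or_ge k 2 with hk2 | hk2
        · have hk1 : k = 1 := by omega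
          have hK1 : (k:ℝ) = 1 := by rw [hk1]; norm_num
          rw [hK1]; norm_num
        · have hmax1 : max (v i (k-1) (ℓ+1) - v i (k-1-1) (ℓ+1+1)) 0
              ≤ ((i:ℝ) - (((k:ℝ) - 2) + ((min (ℓ+1) C₂ : ℕ) : ℝ) * (μ₂ / μ₁)))
                * (h₀ / (C₁ : ℝ) * (1 / μ₁ - 1 / μ₂)) + (h₁ / μ₁ - h₂ / μ₂) := by
            rcases le_or_gt 0 (v i (k-1) (ℓ+1) - v i (k-1-1) (ℓ+1+1)) with h | h
            · have hik1 := ih (k-1) (ℓ+1) (by omega) (by omega) h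
              rw [c1] at hik1
              have ebridge : ((i:ℝ) - (((k:ℝ) - 1 - 1) + ((min (ℓ+1) C₂ : ℕ) : ℝ) * (μ₂ / μ₁)))
                  * (h₀ / (C₁ : ℝ) * (1 / μ₁ - 1 / μ₂)) + (h₁ / μ₁ - h₂ / μ₂)
                = ((i:ℝ) - (((k:ℝ) - 2) + ((min (ℓ+1) C₂ : ℕ) : ℝ) * (μ₂ / μ₁)))
                  * (h₀ / (C₁ : ℝ) * (1 / μ₁ - 1 / μ₂)) + (h₁ / μ₁ - h₂ / μ₂) := by ring
              rw [max_eq_left h]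
              linarith [hik1, ebridge.le, ebridge.ge]
            · rw [max_eq_right h.le]
              exact hB1
          exact mul_le_mul_of_nonneg_left hmax1 hq3
      have hL1 := keyL1 μ₁ μ₂ h₀ h₁ h₂ ((k:ℝ)) ((ℓ:ℝ)) (((min ℓ C₂ : ℕ) : ℝ))
        (((min (ℓ+1) C₂ : ℕ) : ℝ)) ((C₁:ℝ)) ((i:ℝ)) hμ₂ hμ hh₀ hh₂ hK hL
        (Nat.cast_nonneg i) hC1cast hcase
      simp only [Nat.cast_add, Nat.cast_one]
      linarith [key, ht2, ht3, hL1]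
end

section
/- Assume μ₁ < μ₂ and h₁/μ₁ ≤ h₂/μ₂. Then for every (i,k,ℓ) ∈ X̃_diff with ℓ < C₂, if D(i,k,ℓ) ≤ 0 then D(i,k,ℓ) ≥ (i − z_ℓ)·c + b. -/
set_option maxHeartbeats 1000000


lemma arith_key (x y h0 h1 h2 K L I c b d dp g gp Tl Tm Tn a e tm U : ℝ)
    (hx : 0 < x) (hxy : x < y) (hh0 : 0 < h0) (hK : 1 ≤ K) (hL : 0 ≤ L)
    (hcdef : c = h0 / (K + L) * (1 / x - 1 / y)) (hbdef : b = h1 / x - h2 / y)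
    (hd : d = K * x + L * y) (hdp : dp = (K - 1) * x + (L + 1) * y)
    (hg : g = (I + 1) * h0 + K * h1 + L * h2)
    (hgp : gp = (I + 1) * h0 + (K - 1) * h1 + (L + 1) * h2)
    (hTl : Tl = (I - ((K - 1) * x / y + L)) * c + b)
    (hTm : Tm = (I - (K * x / y + (L - 1))) * c + b)
    (hTn : Tn = (I + 1 - ((K - 1) * x / y + L)) * c + b)
    (ha : a = (K - 1) * x / dp) (he : e = L * y / d)
    (htm : (L = 0 ∧ tm = 0) ∨ tm = min Tm 0)
    (hUdef : U = g / d - gp / dp + a * min Tl 0 + e * tm)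
    (hU : U ≤ 0) : Tn ≤ U := by
  have hy : 0 < y := hx.trans hxy
  have hS : 0 < K + L := by linarith
  have hd0 : 0 < d := by rw [hd]; nlinarith
  have hdp0 : 0 < dp := by rw [hdp]; nlinarith
  have hc0 : 0 < c := by
    rw [hcdef]
    have h1x : 1 / y < 1 / x := one_div_lt_one_div_of_lt hx hxy
    exact mul_pos (div_pos hh0 hS) (by linarith)
  have ha0 : 0 ≤ a := by
    rw [ha]; exact div_nonneg (mul_nonneg (by linarith) hx.le) hdp0.le
  have he0 : 0 ≤ e := by
    rw [he]; exact div_nonneg (mul_nonneg hL hy.le) hd0.le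
  have hae : a + e < 1 := by
    rw [ha, he, div_add_div _ _ hdp0.ne' hd0.ne', div_lt_one (mul_pos hdp0 hd0)]
    have hident : dp * d - ((K - 1) * x * d + L * y * dp) = x * y * (K + L) := by
      rw [hd, hdp]; ring
    nlinarith [mul_pos (mul_pos hx hy) hS]
  have hid : g / d - gp / dp = Tn - a * Tl - e * Tm := by
    have h1 : K * x + L * y ≠ 0 := by rw [← hd]; exact hd0.ne'
    have h2 : (K - 1) * x + (L + 1) * y ≠ 0 := by rw [← hdp]; exact hdp0.ne'
    rw [hg, hgp, hTn, hTl, hTm, ha, he, hcdef, hbdef, hd, hdp]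
    have h3 : x * (K - 1) + y * (L + 1) ≠ 0 := by rw [mul_comm x, mul_comm y]; exact h2
    field_simp
    ring
  have hTnTl : Tn = Tl + c := by rw [hTn, hTl]; ring
  have hTnTm : Tn = Tm + c * (x / y) := by rw [hTn, hTm]; ring
  have hcxy0 : 0 < c * (x / y) := mul_pos hc0 (div_pos hx hy)
  rw [hUdef, hid] at hU ⊢
  rcases le_total Tl 0 with hTl0 | hTl0
  · rw [min_eq_left hTl0] at hU ⊢
    rcases htm with ⟨hL0, htm0⟩ | htm'
    · have he0' : e = 0 := by rw [he, hL0]; simp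
      rw [htm0, he0'] at hU ⊢; linarith
    · rw [htm'] at hU ⊢
      rcases le_total Tm 0 with hTm0 | hTm0
      · rw [min_eq_left hTm0] at hU ⊢; linarith
      · rw [min_eq_right hTm0] at hU ⊢
        have hTmTn : Tm ≤ Tn := by linarith
        have h1 : e * Tm ≤ e * Tn := mul_le_mul_of_nonneg_left hTmTn he0
        have hTn0 : 0 < Tn := by linarith
        have h2 : e * Tn < 1 * Tn := mul_lt_mul_of_pos_right (by linarith) hTn0
        linarith
  · rw [min_eq_right hTl0] at hU ⊢
    have hTlTn : Tl ≤ Tn := by linarith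
    have hTn0 : 0 < Tn := by linarith
    have hA1 : a * Tl ≤ a * Tn := mul_le_mul_of_nonneg_left hTlTn ha0
    rcases htm with ⟨hL0, htm0⟩ | htm'
    · have he0' : e = 0 := by rw [he, hL0]; simp
      rw [htm0, he0'] at hU ⊢
      have h2 : a * Tn < 1 * Tn := mul_lt_mul_of_pos_right (by linarith) hTn0
      linarith
    · rw [htm'] at hU ⊢
      rcases le_total Tm 0 with hTm0 | hTm0
      · rw [min_eq_left hTm0] at hU ⊢
        have h2 : a * Tn < 1 * Tn := mul_lt_mul_of_pos_right (by linarith) hTn0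
        linarith
      · rw [min_eq_right hTm0] at hU ⊢
        have hTmTn : Tm ≤ Tn := by linarith
        have h1 : e * Tm ≤ e * Tn := mul_le_mul_of_nonneg_left hTmTn he0
        have h3 : (a + e) * Tn < 1 * Tn := mul_lt_mul_of_pos_right hae hTn0
        linarith

lemma base_layer (C₁ C₂ : ℕ) (μ₁ μ₂ h₁ h₂ : ℝ) (hμ₁ : 0 < μ₁) (hμ₂ : 0 < μ₂)
    (v : ℕ → ℕ → ℕ → ℝ)
    (hlow : ∀ k ℓ : ℕ, k + ℓ ≤ C₁ → ¬(k = 0 ∧ ℓ = 0) →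
      v 0 k ℓ = ((k : ℝ) * h₁ + (ℓ : ℝ) * h₂) / dRate C₂ μ₁ μ₂ k ℓ
        + ((k : ℝ) * μ₁ / dRate C₂ μ₁ μ₂ k ℓ) * v 0 (k - 1) ℓ
        + (((min ℓ C₂ : ℕ) : ℝ) * μ₂ / dRate C₂ μ₁ μ₂ k ℓ) * v 0 k (ℓ - 1)) :
    ∀ s k ℓ : ℕ, k + ℓ = s → s ≤ C₁ → 1 ≤ k → ℓ < C₂ →
      h₁ / μ₁ - h₂ / μ₂ ≤ v 0 k ℓ - v 0 (k - 1) (ℓ + 1) := by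
  intro s
  induction s using Nat.strong_induction_on with
  | _ s ihs =>
    intro k ℓ hs hsC hk hl
    have hK1 : (1:ℝ) ≤ (k:ℝ) := by exact_mod_cast hk
    have hL0 : (0:ℝ) ≤ (ℓ:ℝ) := Nat.cast_nonneg ℓ
    have eqA := hlow k ℓ (by omega) (by omega)
    have eqB := hlow (k-1) (ℓ+1) (by omega) (by simp)
    simp only [dRate, show min ℓ C₂ = ℓ by omega] at eqA
    simp only [dRate, show min (ℓ+1) C₂ = ℓ+1 by omega, Nat.add_sub_cancel,
      Nat.cast_sub hk, Nat.cast_add, Nat.cast_one] at eqB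
    have hd0 : (0:ℝ) < (k:ℝ)*μ₁ + (ℓ:ℝ)*μ₂ := by nlinarith
    have hdp0 : (0:ℝ) < ((k:ℝ)-1)*μ₁ + ((ℓ:ℝ)+1)*μ₂ := by nlinarith
    have key : (v 0 k ℓ - v 0 (k-1) (ℓ+1)) * (((k:ℝ)*μ₁ + (ℓ:ℝ)*μ₂) * (((k:ℝ)-1)*μ₁ + ((ℓ:ℝ)+1)*μ₂))
        = ((((k:ℝ)-1)*μ₁ + ((ℓ:ℝ)+1)*μ₂)*((k:ℝ)*h₁ + (ℓ:ℝ)*h₂)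
            - ((k:ℝ)*μ₁ + (ℓ:ℝ)*μ₂)*(((k:ℝ)-1)*h₁ + ((ℓ:ℝ)+1)*h₂))
          + ((k:ℝ)*μ₁*(((k:ℝ)-1)*μ₁ + ((ℓ:ℝ)+1)*μ₂)
              - ((ℓ:ℝ)+1)*μ₂*((k:ℝ)*μ₁ + (ℓ:ℝ)*μ₂)) * v 0 (k-1) ℓ
          + (ℓ:ℝ)*μ₂*(((k:ℝ)-1)*μ₁ + ((ℓ:ℝ)+1)*μ₂) * v 0 k (ℓ-1)
          - ((k:ℝ)-1)*μ₁*((k:ℝ)*μ₁ + (ℓ:ℝ)*μ₂) * v 0 (k-1-1) (ℓ+1) := by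
      rw [eqA, eqB]
      have hA1 : μ₁*((k:ℝ)-1) + μ₂*((ℓ:ℝ)+1) ≠ 0 := by nlinarith
      have hA3 : μ₁*(k:ℝ) + μ₂*(ℓ:ℝ) ≠ 0 := by nlinarith
      have hA4 : (k:ℝ)+(ℓ:ℝ) ≠ 0 := by nlinarith
      field_simp
      ring
    have f2 : ((ℓ:ℝ)*μ₂*(((k:ℝ)-1)*μ₁ + ((ℓ:ℝ)+1)*μ₂)) * (h₁/μ₁ - h₂/μ₂)
        ≤ ((ℓ:ℝ)*μ₂*(((k:ℝ)-1)*μ₁ + ((ℓ:ℝ)+1)*μ₂)) * (v 0 k (ℓ-1) - v 0 (k-1) ℓ) := by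
      rcases Nat.eq_zero_or_pos ℓ with h0 | h1
      · subst h0; simp
      · have hw := ihs (s-1) (by omega) k (ℓ-1) (by omega) (by omega) hk (by omega)
        rw [show ℓ - 1 + 1 = ℓ by omega] at hw
        exact mul_le_mul_of_nonneg_left hw
          (mul_nonneg (mul_nonneg hL0 hμ₂.le) hdp0.le)
    have f3 : (((k:ℝ)-1)*μ₁*((k:ℝ)*μ₁ + (ℓ:ℝ)*μ₂)) * (h₁/μ₁ - h₂/μ₂)
        ≤ (((k:ℝ)-1)*μ₁*((k:ℝ)*μ₁ + (ℓ:ℝ)*μ₂)) * (v 0 (k-1) ℓ - v 0 (k-1-1) (ℓ+1)) := by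
      rcases Nat.lt_or_ge k 2 with h0 | h1
      · have hk1 : k = 1 := by omega
        subst hk1
        norm_num
      · have hw := ihs (s-1) (by omega) (k-1) ℓ (by omega) (by omega) (by omega) hl
        have hck : ((k-1:ℕ):ℝ) = (k:ℝ) - 1 := by
          simp [Nat.cast_sub hk]
        exact mul_le_mul_of_nonneg_left hw
          (mul_nonneg (mul_nonneg (by linarith) hμ₁.le) hd0.le)
    have hbxy : (h₁/μ₁ - h₂/μ₂)*(μ₁*μ₂) = h₁*μ₂ - h₂*μ₁ := by
      field_simp
    have hbxyS : (h₁/μ₁ - h₂/μ₂)*(μ₁*μ₂)*((k:ℝ)+(ℓ:ℝ)) = (h₁*μ₂ - h₂*μ₁)*((k:ℝ)+(ℓ:ℝ)) := by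
      rw [hbxy]
    have hpoly : (h₁/μ₁ - h₂/μ₂) * (((k:ℝ)*μ₁ + (ℓ:ℝ)*μ₂) * (((k:ℝ)-1)*μ₁ + ((ℓ:ℝ)+1)*μ₂))
        ≤ ((((k:ℝ)-1)*μ₁ + ((ℓ:ℝ)+1)*μ₂)*((k:ℝ)*h₁ + (ℓ:ℝ)*h₂)
            - ((k:ℝ)*μ₁ + (ℓ:ℝ)*μ₂)*(((k:ℝ)-1)*h₁ + ((ℓ:ℝ)+1)*h₂))
          + ((k:ℝ)*μ₁*(((k:ℝ)-1)*μ₁ + ((ℓ:ℝ)+1)*μ₂)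
              - ((ℓ:ℝ)+1)*μ₂*((k:ℝ)*μ₁ + (ℓ:ℝ)*μ₂)) * v 0 (k-1) ℓ
          + (ℓ:ℝ)*μ₂*(((k:ℝ)-1)*μ₁ + ((ℓ:ℝ)+1)*μ₂) * v 0 k (ℓ-1)
          - ((k:ℝ)-1)*μ₁*((k:ℝ)*μ₁ + (ℓ:ℝ)*μ₂) * v 0 (k-1-1) (ℓ+1) := by
      nlinarith [f2, f3, hbxyS]
    rw [← key] at hpoly
    exact le_of_mul_le_mul_right hpoly (mul_pos hd0 hdp0)

theorem stmt16
    (C₁ C₂ : ℕ) (hC₂pos : 1 ≤ C₂) (hC : C₂ < C₁)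
    (μ₁ μ₂ h₀ h₁ h₂ : ℝ)
    (hμ₁ : 0 < μ₁) (hμ₂ : 0 < μ₂)
    (hh₀ : 0 < h₀) (hh₁ : 0 < h₁) (hh₂ : 0 < h₂)
    (v : ℕ → ℕ → ℕ → ℝ) (hv : IsValue C₁ C₂ μ₁ μ₂ h₀ h₁ h₂ v)
    (hμ : μ₁ < μ₂) (hcost : h₁ / μ₁ ≤ h₂ / μ₂) :
    ∀ i k ℓ : ℕ, k + ℓ = C₁ → 1 ≤ k → ℓ < C₂ → Dv v i k ℓ ≤ 0 →
      ((i : ℝ) - (((k : ℝ) - 1) / (μ₂ / μ₁) + (ℓ : ℝ))) *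
            (h₀ / (C₁ : ℝ) * (1 / μ₁ - 1 / μ₂))
          + (h₁ / μ₁ - h₂ / μ₂) ≤ Dv v i k ℓ := by
  obtain ⟨hv0, hlow, hrec⟩ := hv
  intro i
  induction i with
  | zero =>
    intro k ℓ hkl hk hl hDle
    have hbase := base_layer C₁ C₂ μ₁ μ₂ h₁ h₂ hμ₁ hμ₂ v hlow C₁ k ℓ hkl (le_refl _) hk hl
    have hK1 : (1:ℝ) ≤ (k:ℝ) := by exact_mod_cast hk
    have hz : (0:ℝ) ≤ ((k:ℝ)-1)/(μ₂/μ₁) + (ℓ:ℝ) := by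
      have h1 : (0:ℝ) ≤ ((k:ℝ)-1)/(μ₂/μ₁) :=
        div_nonneg (by linarith) (by positivity)
      have h2 : (0:ℝ) ≤ (ℓ:ℝ) := Nat.cast_nonneg ℓ
      linarith
    have hc0 : (0:ℝ) ≤ h₀/(C₁:ℝ) * (1/μ₁ - 1/μ₂) := by
      have h1x : 1/μ₂ ≤ 1/μ₁ := one_div_le_one_div_of_le hμ₁ hμ.le
      have hC : (0:ℝ) ≤ (C₁:ℝ) := Nat.cast_nonneg _
      exact mul_nonneg (div_nonneg hh₀.le hC) (by linarith)
    simp only [Dv, Nat.cast_zero]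
    simp only [Dv] at hDle
    nlinarith [hbase, mul_nonneg hz hc0]
  | succ i ih =>
    intro k ℓ hkl hk hl hDle
    have hK1 : (1:ℝ) ≤ (k:ℝ) := by exact_mod_cast hk
    have hL0 : (0:ℝ) ≤ (ℓ:ℝ) := Nat.cast_nonneg ℓ
    have hC1cast : (C₁:ℝ) = (k:ℝ) + (ℓ:ℝ) := by rw [← hkl]; push_cast; ring
    have hd0 : (0:ℝ) < ((k:ℝ)*μ₁ + (ℓ:ℝ)*μ₂) := by nlinarith
    have hdp0 : (0:ℝ) < (((k:ℝ)-1)*μ₁ + ((ℓ:ℝ)+1)*μ₂) := by nlinarith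
    have eq1 := hrec i k ℓ hkl
    have eq2 := hrec i (k-1) (ℓ+1) (by omega)
    simp only [dRate, show min ℓ C₂ = ℓ by omega] at eq1
    simp only [dRate, show min (ℓ+1) C₂ = ℓ+1 by omega, show k-1+1 = k by omega,
      Nat.add_sub_cancel, Nat.cast_sub hk, Nat.cast_add, Nat.cast_one] at eq2
    obtain ⟨tm, htm, hPmul⟩ : ∃ tm : ℝ, (((ℓ:ℝ) = 0 ∧ tm = 0) ∨ tm = min (((i:ℝ) - ((k:ℝ)*μ₁/μ₂ + ((ℓ:ℝ)-1))) * (h₀/((k:ℝ)+(ℓ:ℝ)) * (1/μ₁ - 1/μ₂)) + (h₁/μ₁ - h₂/μ₂)) 0) ∧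
        ((ℓ:ℝ)*μ₂*(((k:ℝ)-1)*μ₁ + ((ℓ:ℝ)+1)*μ₂)) * ((v i k ℓ) + tm) ≤ ((ℓ:ℝ)*μ₂*(((k:ℝ)-1)*μ₁ + ((ℓ:ℝ)+1)*μ₂)) * (min (v i (k+1) (ℓ-1)) (v i k ℓ)) := by
      rcases Nat.eq_zero_or_pos ℓ with h0 | h1
      · refine ⟨0, Or.inl ⟨by simp [h0], rfl⟩, ?_⟩
        subst h0; simp
      · have h1' : 1 ≤ ℓ := h1
        refine ⟨min (((i:ℝ) - ((k:ℝ)*μ₁/μ₂ + ((ℓ:ℝ)-1))) * (h₀/((k:ℝ)+(ℓ:ℝ)) * (1/μ₁ - 1/μ₂)) + (h₁/μ₁ - h₂/μ₂)) 0, Or.inr rfl, ?_⟩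
        have hco : (0:ℝ) ≤ ((ℓ:ℝ)*μ₂*(((k:ℝ)-1)*μ₁ + ((ℓ:ℝ)+1)*μ₂)) := by positivity
        refine mul_le_mul_of_nonneg_left ?_ hco
        rcases le_total (v i (k+1) (ℓ-1)) (v i k ℓ) with hA | hA
        · rw [min_eq_left hA]
          have hDp : Dv v i (k+1) (ℓ-1) ≤ 0 := by
            simp only [Dv, Nat.add_sub_cancel, show ℓ-1+1 = ℓ by omega]
            linarith
          have hb2 := ih (k+1) (ℓ-1) (by omega) (by omega) (by omega) hDp
          simp only [Dv, Nat.add_sub_cancel, show ℓ-1+1 = ℓ by omega] at hb2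
          have hcast : ((i:ℝ) - ((((k+1:ℕ):ℝ)-1)/(μ₂/μ₁) + ((ℓ-1:ℕ):ℝ))) *
                (h₀/(C₁:ℝ) * (1/μ₁ - 1/μ₂)) + (h₁/μ₁ - h₂/μ₂) = (((i:ℝ) - ((k:ℝ)*μ₁/μ₂ + ((ℓ:ℝ)-1))) * (h₀/((k:ℝ)+(ℓ:ℝ)) * (1/μ₁ - 1/μ₂)) + (h₁/μ₁ - h₂/μ₂)) := by
            simp only [Nat.cast_sub h1', Nat.cast_add, Nat.cast_one]
            rw [hC1cast, div_div_eq_mul_div]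
            ring
          rw [hcast] at hb2
          have := min_le_left (((i:ℝ) - ((k:ℝ)*μ₁/μ₂ + ((ℓ:ℝ)-1))) * (h₀/((k:ℝ)+(ℓ:ℝ)) * (1/μ₁ - 1/μ₂)) + (h₁/μ₁ - h₂/μ₂)) (0:ℝ)
          linarith
        · rw [min_eq_right hA]
          have := min_le_right (((i:ℝ) - ((k:ℝ)*μ₁/μ₂ + ((ℓ:ℝ)-1))) * (h₀/((k:ℝ)+(ℓ:ℝ)) * (1/μ₁ - 1/μ₂)) + (h₁/μ₁ - h₂/μ₂)) (0:ℝ)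
          linarith
    have key : (Dv v (i+1) k ℓ) * (((k:ℝ)*μ₁ + (ℓ:ℝ)*μ₂)*(((k:ℝ)-1)*μ₁ + ((ℓ:ℝ)+1)*μ₂)) = (((k:ℝ)-1)*μ₁ + ((ℓ:ℝ)+1)*μ₂)*(((i:ℝ)+1)*h₀ + (k:ℝ)*h₁ + (ℓ:ℝ)*h₂) - ((k:ℝ)*μ₁ + (ℓ:ℝ)*μ₂)*(((i:ℝ)+1)*h₀ + ((k:ℝ)-1)*h₁ + ((ℓ:ℝ)+1)*h₂) + ((k:ℝ)*μ₁*(((k:ℝ)-1)*μ₁ + ((ℓ:ℝ)+1)*μ₂) - ((ℓ:ℝ)+1)*μ₂*((k:ℝ)*μ₁ + (ℓ:ℝ)*μ₂)) * (min (v i k ℓ) (v i (k-1) (ℓ+1))) + ((ℓ:ℝ)*μ₂*(((k:ℝ)-1)*μ₁ + ((ℓ:ℝ)+1)*μ₂)) * (min (v i (k+1) (ℓ-1)) (v i k ℓ)) - (((k:ℝ)-1)*μ₁*((k:ℝ)*μ₁ + (ℓ:ℝ)*μ₂)) * (min (v i (k-1) (ℓ+1)) (v i (k-1-1) (ℓ+1+1)))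 := by
      simp only [Dv]
      rw [eq1, eq2]
      have hA1 : μ₁*((k:ℝ)-1) + μ₂*((ℓ:ℝ)+1) ≠ 0 := by nlinarith
      have hA3 : μ₁*(k:ℝ) + μ₂*(ℓ:ℝ) ≠ 0 := by nlinarith
      have hA4 : (k:ℝ)+(ℓ:ℝ) ≠ 0 := by nlinarith
      field_simp
      ring
    have hUkey : ((((i:ℝ)+1)*h₀ + (k:ℝ)*h₁ + (ℓ:ℝ)*h₂)/((k:ℝ)*μ₁ + (ℓ:ℝ)*μ₂) - (((i:ℝ)+1)*h₀ + ((k:ℝ)-1)*h₁ + ((ℓ:ℝ)+1)*h₂)/(((k:ℝ)-1)*μ₁ + ((ℓ:ℝ)+1)*μ₂) + (((k:ℝ)-1)*μ₁/(((k:ℝ)-1)*μ₁ + ((ℓ:ℝ)+1)*μ₂)) * min (((i:ℝ) - (((k:ℝ)-1)*μ₁/μ₂ + (ℓ:ℝ))) * (h₀/((k:ℝ)+(ℓ:ℝ)) * (1/μ₁ - 1/μ₂)) + (h₁/μ₁ - h₂/μ₂)) 0 + ((ℓ:ℝ)*μ₂/((k:ℝ)*μ₁ + (ℓ:ℝ)*μ₂))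 * tm) * (((k:ℝ)*μ₁ + (ℓ:ℝ)*μ₂)*(((k:ℝ)-1)*μ₁ + ((ℓ:ℝ)+1)*μ₂)) = (((k:ℝ)-1)*μ₁ + ((ℓ:ℝ)+1)*μ₂)*(((i:ℝ)+1)*h₀ + (k:ℝ)*h₁ + (ℓ:ℝ)*h₂) - ((k:ℝ)*μ₁ + (ℓ:ℝ)*μ₂)*(((i:ℝ)+1)*h₀ + ((k:ℝ)-1)*h₁ + ((ℓ:ℝ)+1)*h₂) + (((k:ℝ)-1)*μ₁*((k:ℝ)*μ₁ + (ℓ:ℝ)*μ₂)) * (min (((i:ℝ) - (((k:ℝ)-1)*μ₁/μ₂ + (ℓ:ℝ))) * (h₀/((k:ℝ)+(ℓ:ℝ)) * (1/μ₁ - 1/μ₂)) + (h₁/μ₁ - h₂/μ₂)) 0) + ((ℓ:ℝ)*μ₂*(((k:ℝ)-1)*μ₁ + ((ℓ:ℝ)+1)*μ₂)) * tm := by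
      have hA1 : μ₁*((k:ℝ)-1) + μ₂*((ℓ:ℝ)+1) ≠ 0 := by nlinarith
      have hA3 : μ₁*(k:ℝ) + μ₂*(ℓ:ℝ) ≠ 0 := by nlinarith
      have hA4 : (k:ℝ)+(ℓ:ℝ) ≠ 0 := by nlinarith
      field_simp
    have hTlconv : ((i:ℝ) - (((k:ℝ)-1)/(μ₂/μ₁) + (ℓ:ℝ))) * (h₀/(C₁:ℝ) * (1/μ₁ - 1/μ₂))
        + (h₁/μ₁ - h₂/μ₂) = (((i:ℝ) - (((k:ℝ)-1)*μ₁/μ₂ + (ℓ:ℝ))) * (h₀/((k:ℝ)+(ℓ:ℝ)) * (1/μ₁ - 1/μ₂)) + (h₁/μ₁ - h₂/μ₂)) := by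
      rw [hC1cast, div_div_eq_mul_div]
    have hcoQ : (0:ℝ) ≤ (((k:ℝ)-1)*μ₁*((k:ℝ)*μ₁ + (ℓ:ℝ)*μ₂)) := by
      have : (0:ℝ) ≤ (k:ℝ)-1 := by linarith
      positivity
    have hcoP : (0:ℝ) ≤ ((ℓ:ℝ)*μ₂*(((k:ℝ)-1)*μ₁ + ((ℓ:ℝ)+1)*μ₂)) := by positivity
    have f6 : (((k:ℝ)-1)*μ₁*((k:ℝ)*μ₁ + (ℓ:ℝ)*μ₂)) * (min (v i (k-1) (ℓ+1)) (v i (k-1-1) (ℓ+1+1))) ≤ (((k:ℝ)-1)*μ₁*((k:ℝ)*μ₁ + (ℓ:ℝ)*μ₂)) * (v i (k-1) (ℓ+1)) :=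
      mul_le_mul_of_nonneg_left (min_le_left _ _) hcoQ
    have f5 : ((ℓ:ℝ)*μ₂*(((k:ℝ)-1)*μ₁ + ((ℓ:ℝ)+1)*μ₂)) * (Dv v i k ℓ) = ((ℓ:ℝ)*μ₂*(((k:ℝ)-1)*μ₁ + ((ℓ:ℝ)+1)*μ₂)) * (v i k ℓ) - ((ℓ:ℝ)*μ₂*(((k:ℝ)-1)*μ₁ + ((ℓ:ℝ)+1)*μ₂)) * (v i (k-1) (ℓ+1)) := by
      simp only [Dv]; ring
    have hpoly : (((k:ℝ)-1)*μ₁ + ((ℓ:ℝ)+1)*μ₂)*(((i:ℝ)+1)*h₀ + (k:ℝ)*h₁ + (ℓ:ℝ)*h₂) - ((k:ℝ)*μ₁ + (ℓ:ℝ)*μ₂)*(((i:ℝ)+1)*h₀ + ((k:ℝ)-1)*h₁ + ((ℓ:ℝ)+1)*h₂) + (((k:ℝ)-1)*μ₁*((k:ℝ)*μ₁ + (ℓ:ℝ)*μ₂)) * (min (((i:ℝ) - (((k:ℝ)-1)*μ₁/μ₂ + (ℓ:ℝ))) * (h₀/((k:ℝ)+(ℓ:ℝ)) * (1/μ₁ -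 1/μ₂)) + (h₁/μ₁ - h₂/μ₂)) 0) + ((ℓ:ℝ)*μ₂*(((k:ℝ)-1)*μ₁ + ((ℓ:ℝ)+1)*μ₂)) * tm ≤ (((k:ℝ)-1)*μ₁ + ((ℓ:ℝ)+1)*μ₂)*(((i:ℝ)+1)*h₀ + (k:ℝ)*h₁ + (ℓ:ℝ)*h₂) - ((k:ℝ)*μ₁ + (ℓ:ℝ)*μ₂)*(((i:ℝ)+1)*h₀ + ((k:ℝ)-1)*h₁ + ((ℓ:ℝ)+1)*h₂) + ((k:ℝ)*μ₁*(((k:ℝ)-1)*μ₁ + ((ℓ:ℝ)+1)*μ₂) - ((ℓ:ℝ)+1)*μ₂*((k:ℝ)*μ₁ + (ℓ:ℝ)*μ₂)) * (min (v i k ℓ) (v i (k-1) (ℓ+1))) + ((ℓ:ℝ)*μ₂*(((k:ℝ)-1)*μ₁ + ((ℓ:ℝ)+1)*μ₂)) * (min (v i (k+1) (ℓ-1)) (v i k ℓ)) - (((k:ℝ)-1)*μ₁*((k:ℝ)*μ₁ + (ℓ:ℝ)*μ₂)) * (min (v i (k-1) (ℓ+1)) (v i (k-1-1) (ℓ+1+1)))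 := by
      rcases le_or_gt (Dv v i k ℓ) 0 with hD | hD
      · have hAB : (v i k ℓ) ≤ (v i (k-1) (ℓ+1)) := by simp only [Dv] at hD; linarith
        have hMBeq : min (v i k ℓ) (v i (k-1) (ℓ+1)) = (v i (k-1) (ℓ+1)) + Dv v i k ℓ := by
          rw [min_eq_left hAB]; simp only [Dv]; ring
        have f3 : ((k:ℝ)*μ₁*(((k:ℝ)-1)*μ₁ + ((ℓ:ℝ)+1)*μ₂) - ((ℓ:ℝ)+1)*μ₂*((k:ℝ)*μ₁ + (ℓ:ℝ)*μ₂)) * (min (v i k ℓ) (v i (k-1) (ℓ+1))) = ((k:ℝ)*μ₁*(((k:ℝ)-1)*μ₁ + ((ℓ:ℝ)+1)*μ₂) - ((ℓ:ℝ)+1)*μ₂*((k:ℝ)*μ₁ + (ℓ:ℝ)*μ₂)) * (v i (k-1) (ℓ+1)) + ((k:ℝ)*μ₁*(((k:ℝ)-1)*μ₁ + ((ℓ:ℝ)+1)*μ₂) - ((ℓ:ℝ)+1)*μ₂*((k:ℝ)*μ₁ + (ℓ:ℝ)*μ₂)) * (Dv v i k ℓ) := by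
          rw [hMBeq]; ring
        have hTlD := ih k ℓ hkl hk hl hD
        rw [hTlconv] at hTlD
        have hTl0 : min (((i:ℝ) - (((k:ℝ)-1)*μ₁/μ₂ + (ℓ:ℝ))) * (h₀/((k:ℝ)+(ℓ:ℝ)) * (1/μ₁ - 1/μ₂)) + (h₁/μ₁ - h₂/μ₂)) 0 = (((i:ℝ) - (((k:ℝ)-1)*μ₁/μ₂ + (ℓ:ℝ))) * (h₀/((k:ℝ)+(ℓ:ℝ)) * (1/μ₁ - 1/μ₂)) + (h₁/μ₁ - h₂/μ₂)) := min_eq_left (by linarith)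
        have f4 : (((k:ℝ)-1)*μ₁*((k:ℝ)*μ₁ + (ℓ:ℝ)*μ₂)) * (min (((i:ℝ) - (((k:ℝ)-1)*μ₁/μ₂ + (ℓ:ℝ))) * (h₀/((k:ℝ)+(ℓ:ℝ)) * (1/μ₁ - 1/μ₂)) + (h₁/μ₁ - h₂/μ₂)) 0) ≤ (((k:ℝ)-1)*μ₁*((k:ℝ)*μ₁ + (ℓ:ℝ)*μ₂)) * (Dv v i k ℓ) := by
          rw [hTl0]; exact mul_le_mul_of_nonneg_left hTlD hcoQ
        linarith [f3, f4, f5, f6, hPmul]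
      · have hBA : (v i (k-1) (ℓ+1)) ≤ (v i k ℓ) := by simp only [Dv] at hD; linarith
        have hMBeq : min (v i k ℓ) (v i (k-1) (ℓ+1)) = (v i (k-1) (ℓ+1)) := min_eq_right hBA
        have f3 : ((k:ℝ)*μ₁*(((k:ℝ)-1)*μ₁ + ((ℓ:ℝ)+1)*μ₂) - ((ℓ:ℝ)+1)*μ₂*((k:ℝ)*μ₁ + (ℓ:ℝ)*μ₂)) * (min (v i k ℓ) (v i (k-1) (ℓ+1))) = ((k:ℝ)*μ₁*(((k:ℝ)-1)*μ₁ + ((ℓ:ℝ)+1)*μ₂) - ((ℓ:ℝ)+1)*μ₂*((k:ℝ)*μ₁ + (ℓ:ℝ)*μ₂)) * (v i (k-1) (ℓ+1)) := by rw [hMBeq]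
        have f7 : (0:ℝ) ≤ ((ℓ:ℝ)*μ₂*(((k:ℝ)-1)*μ₁ + ((ℓ:ℝ)+1)*μ₂)) * (Dv v i k ℓ) := mul_nonneg hcoP hD.le
        have f8 : (((k:ℝ)-1)*μ₁*((k:ℝ)*μ₁ + (ℓ:ℝ)*μ₂)) * (min (((i:ℝ) - (((k:ℝ)-1)*μ₁/μ₂ + (ℓ:ℝ))) * (h₀/((k:ℝ)+(ℓ:ℝ)) * (1/μ₁ - 1/μ₂)) + (h₁/μ₁ - h₂/μ₂)) 0) ≤ 0 :=
          mul_nonpos_of_nonneg_of_nonpos hcoQ (min_le_right _ _)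
        linarith [f3, f5, f6, f7, f8, hPmul]
    have hmul : ((((i:ℝ)+1)*h₀ + (k:ℝ)*h₁ + (ℓ:ℝ)*h₂)/((k:ℝ)*μ₁ + (ℓ:ℝ)*μ₂) - (((i:ℝ)+1)*h₀ + ((k:ℝ)-1)*h₁ + ((ℓ:ℝ)+1)*h₂)/(((k:ℝ)-1)*μ₁ + ((ℓ:ℝ)+1)*μ₂) + (((k:ℝ)-1)*μ₁/(((k:ℝ)-1)*μ₁ + ((ℓ:ℝ)+1)*μ₂)) * min (((i:ℝ) - (((k:ℝ)-1)*μ₁/μ₂ + (ℓ:ℝ))) * (h₀/((k:ℝ)+(ℓ:ℝ)) * (1/μ₁ - 1/μ₂)) + (h₁/μ₁ - h₂/μ₂)) 0 + ((ℓ:ℝ)*μ₂/((k:ℝ)*μ₁ + (ℓ:ℝ)*μ₂)) * tm) * (((k:ℝ)*μ₁ + (ℓ:ℝ)*μ₂)*(((k:ℝ)-1)*μ₁ + ((ℓ:ℝ)+1)*μ₂)) ≤ (Dv v (i+1) k ℓ) * (((k:ℝ)*μ₁ + (ℓ:ℝ)*μ₂)*(((k:ℝ)-1)*μ₁ + ((ℓ:ℝ)+1)*μ₂))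 := by
      rw [hUkey, key]; exact hpoly
    have hstep : ((((i:ℝ)+1)*h₀ + (k:ℝ)*h₁ + (ℓ:ℝ)*h₂)/((k:ℝ)*μ₁ + (ℓ:ℝ)*μ₂) - (((i:ℝ)+1)*h₀ + ((k:ℝ)-1)*h₁ + ((ℓ:ℝ)+1)*h₂)/(((k:ℝ)-1)*μ₁ + ((ℓ:ℝ)+1)*μ₂) + (((k:ℝ)-1)*μ₁/(((k:ℝ)-1)*μ₁ + ((ℓ:ℝ)+1)*μ₂)) * min (((i:ℝ) - (((k:ℝ)-1)*μ₁/μ₂ + (ℓ:ℝ))) * (h₀/((k:ℝ)+(ℓ:ℝ)) * (1/μ₁ - 1/μ₂)) + (h₁/μ₁ - h₂/μ₂)) 0 + ((ℓ:ℝ)*μ₂/((k:ℝ)*μ₁ + (ℓ:ℝ)*μ₂)) * tm) ≤ Dv v (i+1) k ℓ := le_of_mul_le_mul_right hmul (mul_pos hd0 hdp0)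
    have harith : (((i:ℝ) + 1 - (((k:ℝ)-1)*μ₁/μ₂ + (ℓ:ℝ))) * (h₀/((k:ℝ)+(ℓ:ℝ)) * (1/μ₁ - 1/μ₂)) + (h₁/μ₁ - h₂/μ₂)) ≤ ((((i:ℝ)+1)*h₀ + (k:ℝ)*h₁ + (ℓ:ℝ)*h₂)/((k:ℝ)*μ₁ + (ℓ:ℝ)*μ₂) - (((i:ℝ)+1)*h₀ + ((k:ℝ)-1)*h₁ + ((ℓ:ℝ)+1)*h₂)/(((k:ℝ)-1)*μ₁ + ((ℓ:ℝ)+1)*μ₂) + (((k:ℝ)-1)*μ₁/(((k:ℝ)-1)*μ₁ + ((ℓ:ℝ)+1)*μ₂)) * min (((i:ℝ) - (((k:ℝ)-1)*μ₁/μ₂ + (ℓ:ℝ))) * (h₀/((k:ℝ)+(ℓ:ℝ)) * (1/μ₁ - 1/μ₂)) + (h₁/μ₁ - h₂/μ₂)) 0 + ((ℓ:ℝ)*μ₂/((k:ℝ)*μ₁ + (ℓ:ℝ)*μ₂)) * tm) :=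
      arith_key μ₁ μ₂ h₀ h₁ h₂ (k:ℝ) (ℓ:ℝ) (i:ℝ) (h₀/((k:ℝ)+(ℓ:ℝ)) * (1/μ₁ - 1/μ₂)) (h₁/μ₁ - h₂/μ₂) ((k:ℝ)*μ₁ + (ℓ:ℝ)*μ₂) (((k:ℝ)-1)*μ₁ + ((ℓ:ℝ)+1)*μ₂) (((i:ℝ)+1)*h₀ + (k:ℝ)*h₁ + (ℓ:ℝ)*h₂) (((i:ℝ)+1)*h₀ + ((k:ℝ)-1)*h₁ + ((ℓ:ℝ)+1)*h₂) (((i:ℝ) - (((k:ℝ)-1)*μ₁/μ₂ + (ℓ:ℝ))) * (h₀/((k:ℝ)+(ℓ:ℝ)) * (1/μ₁ - 1/μ₂)) + (h₁/μ₁ - h₂/μ₂)) (((i:ℝ) - ((k:ℝ)*μ₁/μ₂ + ((ℓ:ℝ)-1))) * (h₀/((k:ℝ)+(ℓ:ℝ)) * (1/μ₁ - 1/μ₂)) + (h₁/μ₁ - h₂/μ₂)) (((i:ℝ) + 1 - (((k:ℝ)-1)*μ₁/μ₂ + (ℓ:ℝ))) * (h₀/((k:ℝ)+(ℓ:ℝ))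 * (1/μ₁ - 1/μ₂)) + (h₁/μ₁ - h₂/μ₂))
        (((k:ℝ)-1)*μ₁/(((k:ℝ)-1)*μ₁ + ((ℓ:ℝ)+1)*μ₂)) ((ℓ:ℝ)*μ₂/((k:ℝ)*μ₁ + (ℓ:ℝ)*μ₂)) tm ((((i:ℝ)+1)*h₀ + (k:ℝ)*h₁ + (ℓ:ℝ)*h₂)/((k:ℝ)*μ₁ + (ℓ:ℝ)*μ₂) - (((i:ℝ)+1)*h₀ + ((k:ℝ)-1)*h₁ + ((ℓ:ℝ)+1)*h₂)/(((k:ℝ)-1)*μ₁ + ((ℓ:ℝ)+1)*μ₂) + (((k:ℝ)-1)*μ₁/(((k:ℝ)-1)*μ₁ + ((ℓ:ℝ)+1)*μ₂)) * min (((i:ℝ) - (((k:ℝ)-1)*μ₁/μ₂ + (ℓ:ℝ))) * (h₀/((k:ℝ)+(ℓ:ℝ)) * (1/μ₁ - 1/μ₂)) + (h₁/μ₁ - h₂/μ₂)) 0 + ((ℓ:ℝ)*μ₂/((k:ℝ)*μ₁ + (ℓ:ℝ)*μ₂)) * tm) hμ₁ hμ hh₀ hK1 hL0 rfl rfl rfl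 rfl rfl rfl rfl rfl rfl rfl rfl htm rfl
        (hstep.trans hDle)
    have hTnconv : (((i+1:ℕ):ℝ) - (((k:ℝ)-1)/(μ₂/μ₁) + (ℓ:ℝ))) * (h₀/(C₁:ℝ) * (1/μ₁ - 1/μ₂))
        + (h₁/μ₁ - h₂/μ₂) = (((i:ℝ) + 1 - (((k:ℝ)-1)*μ₁/μ₂ + (ℓ:ℝ))) * (h₀/((k:ℝ)+(ℓ:ℝ)) * (1/μ₁ - 1/μ₂)) + (h₁/μ₁ - h₂/μ₂)) := by
      rw [hC1cast, div_div_eq_mul_div]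
      push_cast
      ring
    rw [hTnconv]
    exact harith.trans hstep
end
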